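/- Let α be a type and R ⊆ FreeGroup α a set of relators with 1 ∉ R. Then every nontrivial element of the normal closure of R is reachable, by a finite sequence of elementary moves all of whose resulting states are nontrivial, from some relator or inverse relator: for every w ∈ Subgroup.normalClosure R with w ≠ 1, there exists r : FreeGroup α with (r ∈ R or r⁻¹ ∈ R) such that Relation.ReflTransGen step01_R r w holds. -/

import Mathlib

/-- The elementary-move relation: `z` is obtained from `w` either by a
conjugation move by a generator (or its inverse), or by appending a relator
or an inverse relator on the right. -/
def StepR {α : Type*} (R : Set (FreeGroup α)) (w z : FreeGroup α) : Prop :=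
  (∃ a : α, z = FreeGroup.of a * w * (FreeGroup.of a)⁻¹ ∨
    z = (FreeGroup.of a)⁻¹ * w * FreeGroup.of a) ∨
  (∃ t : FreeGroup α, (t ∈ R ∨ t⁻¹ ∈ R) ∧ z = w * t)

/-- The identity-avoiding elementary-move relation. -/
def Step01R {α : Type*} (R : Set (FreeGroup α)) (w z : FreeGroup α) : Prop :=
  z ≠ 1 ∧ StepR R w z

lemma conj_reachable {α : Type*} (R : Set (FreeGroup α)) (g : FreeGroup α) :
    ∀ w, Relation.ReflTransGen (StepR R) w (g * w * g⁻¹) := by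
  induction g using FreeGroup.induction_on with
  | C1 => intro w; simpa using Relation.ReflTransGen.refl
  | of a =>
      intro w
      exact Relation.ReflTransGen.single (Or.inl ⟨a, Or.inl rfl⟩)
  | inv_of a _ =>
      intro w
      refine Relation.ReflTransGen.single (Or.inl ⟨a, Or.inr ?_⟩)
      rw [inv_inv]
  | mul x y hx hy =>
      intro w
      have h1 := hy w
      have h2 := hx (y * w * y⁻¹)
      have : x * (y * w * y⁻¹) * x⁻¹ = (x * y) * w * (x * y)⁻¹ := by
        rw [mul_inv_rev]; group
      rw [this] at h2
      exact h1.trans h2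

lemma append_reachable {α : Type*} (R : Set (FreeGroup α)) :
    ∀ w ∈ Subgroup.normalClosure R,
      (∀ u, Relation.ReflTransGen (StepR R) u (u * w)) ∧
      (∀ u, Relation.ReflTransGen (StepR R) u (u * w⁻¹)) := by
  intro w hw
  refine Subgroup.closure_induction ?_ ?_ ?_ ?_ hw
  · rintro x hx
    rw [Group.mem_conjugatesOfSet_iff] at hx
    obtain ⟨r, hr, hc⟩ := hx
    rw [isConj_iff] at hc
    obtain ⟨g, rfl⟩ := hc
    constructor
    · intro u
      have h1 := conj_reachable R g⁻¹ u
      have h2 : StepR R (g⁻¹ * u * g⁻¹⁻¹) (g⁻¹ * u * g⁻¹⁻¹ * r) :=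
        Or.inr ⟨r, Or.inl hr, rfl⟩
      have h3 := conj_reachable R g (g⁻¹ * u * g⁻¹⁻¹ * r)
      have he : g * (g⁻¹ * u * g⁻¹⁻¹ * r) * g⁻¹ = u * (g * r * g⁻¹) := by group
      rw [he] at h3
      exact (h1.tail h2).trans h3
    · intro u
      have h1 := conj_reachable R g⁻¹ u
      have h2 : StepR R (g⁻¹ * u * g⁻¹⁻¹) (g⁻¹ * u * g⁻¹⁻¹ * r⁻¹) :=
        Or.inr ⟨r⁻¹, Or.inr (by rwa [inv_inv]), rfl⟩
      have h3 := conj_reachable R g (g⁻¹ * u * g⁻¹⁻¹ * r⁻¹)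
      have he : g * (g⁻¹ * u * g⁻¹⁻¹ * r⁻¹) * g⁻¹ = u * (g * r * g⁻¹)⁻¹ := by group
      rw [he] at h3
      exact (h1.tail h2).trans h3
  · constructor <;> intro u <;> simpa using Relation.ReflTransGen.refl
  · rintro x y _ _ ⟨hx1, hx2⟩ ⟨hy1, hy2⟩
    constructor
    · intro u
      have := hy1 (u * x)
      rw [mul_assoc] at this
      exact (hx1 u).trans this
    · intro u
      have := hx2 (u * y⁻¹)
      rw [mul_assoc, ← mul_inv_rev] at this
      exact (hy2 u).trans this
  · rintro x _ ⟨hx1, hx2⟩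
    exact ⟨hx2, by simpa using hx1⟩

lemma avoid_one {α : Type*} (R : Set (FreeGroup α)) :
    ∀ s w, Relation.ReflTransGen (StepR R) s w → w ≠ 1 →
      (∃ r : FreeGroup α, (r ∈ R ∨ r⁻¹ ∈ R) ∧
        Relation.ReflTransGen (Step01R R) r w) ∨
      (s ≠ 1 ∧ Relation.ReflTransGen (Step01R R) s w) := by
  intro s w h
  induction h with
  | refl => intro hne; exact Or.inr ⟨hne, Relation.ReflTransGen.refl⟩
  | @tail z w' hsz hzw ih =>
      intro hw
      by_cases hz : z = 1
      · subst hz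
        rcases hzw with ⟨a, ha | ha⟩ | ⟨t, ht, he⟩
        · exfalso; apply hw; rw [ha]; group
        · exfalso; apply hw; rw [ha]; group
        · rw [one_mul] at he; subst he
          exact Or.inl ⟨w', ht, Relation.ReflTransGen.refl⟩
      · rcases ih hz with ⟨r, hr, hc⟩ | ⟨hs, hc⟩
        · exact Or.inl ⟨r, hr, hc.tail ⟨hw, hzw⟩⟩
        · exact Or.inr ⟨hs, hc.tail ⟨hw, hzw⟩⟩

/-- Every nontrivial element of the normal closure of `R` (with `1 ∉ R`) is
reachable from some relator or inverse relator by a finite sequence of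
elementary moves all of whose resulting states are nontrivial. -/
theorem reachable_from_relator {α : Type*} (R : Set (FreeGroup α))
    (h1R : (1 : FreeGroup α) ∉ R) :
    ∀ w ∈ Subgroup.normalClosure R, w ≠ 1 →
      ∃ r : FreeGroup α, (r ∈ R ∨ r⁻¹ ∈ R) ∧
        Relation.ReflTransGen (Step01R R) r w := by
  intro w hw hne
  have h1 := ((append_reachable R w hw).1 1)
  rw [one_mul] at h1
  rcases avoid_one R 1 w h1 hne with h | ⟨hs, _⟩
  · exact h
  · exact absurd rfl hs
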